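/- On the hyperplane H(C_n) defined by setting s_{pq} constant for all pairs (p,q), 2 ≤ p < q ≤ n, that are not edges of the tree C_n, if a cubic tree graph g has a propagator s_A where A ⊆ {2,…,n} does not induce a connected subgraph of C_n, then the pullback of W_g to H(C_n) vanishes, i.e., the Jacobian N_g of (s_1^{(g)},…,s_{n−3}^{(g)}) with respect to coordinates on H(C_n) is zero. -/

import Mathlib

open Finset SimpleGraph

namespace Stmt19Aux

variable {V : Type*} [Fintype V] [DecidableEq V] {T : SimpleGraph V}

/-- double sum of a symmetric two-point indicator. -/
lemma pairsum (s : Finset V) (a b : V) (hab : a ≠ b) :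
    ∑ p ∈ s, ∑ q ∈ s, (if (p = a ∧ q = b) ∨ (p = b ∧ q = a) then (1:ℝ) else 0)
      = if a ∈ s ∧ b ∈ s then 2 else 0 := by
  have key : ∀ p q : V, (if (p = a ∧ q = b) ∨ (p = b ∧ q = a) then (1:ℝ) else 0)
      = (if p = a then (1:ℝ) else 0) * (if q = b then (1:ℝ) else 0)
        + (if p = b then (1:ℝ) else 0) * (if q = a then (1:ℝ) else 0) := by
    intro p q
    by_cases h1 : p = a <;> by_cases h2 : q = b <;> by_cases h3 : p = b <;>
      by_cases h4 : q = a <;> simp_all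
  simp only [key]
  rw [Finset.sum_congr rfl (fun p _ => Finset.sum_add_distrib), Finset.sum_add_distrib]
  have e1 : ∀ (x y : V), ∑ p ∈ s, ∑ q ∈ s,
      (if p = x then (1:ℝ) else 0) * (if q = y then (1:ℝ) else 0)
      = (if x ∈ s then (1:ℝ) else 0) * (if y ∈ s then (1:ℝ) else 0) := by
    intro x y
    rw [← Finset.sum_mul_sum]
    rw [Finset.sum_ite_eq' s x (fun _ => (1:ℝ)), Finset.sum_ite_eq' s y (fun _ => (1:ℝ))]
  rw [e1 a b, e1 b a]
  by_cases ha : a ∈ s <;> by_cases hb : b ∈ s <;> simp [ha, hb] <;> norm_num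

section GraphLemmas

attribute [local instance] Classical.propDecidable

/-- laminar families of sets of size at least 2 inside a ground set `Gd` have
fewer than `Gd.card` members. -/
lemma laminar_bound (N : ℕ) : ∀ (F : Finset (Finset V)) (Gd : Finset V),
    F.card ≤ N →
    (∀ S ∈ F, S ⊆ Gd) → (∀ S ∈ F, 2 ≤ S.card) →
    (∀ S ∈ F, ∀ S' ∈ F, S ⊆ S' ∨ S' ⊆ S ∨ Disjoint S S') →
    F.Nonempty → F.card < Gd.card := by
  induction N with
  | zero =>
    intro F Gd hN _ _ _ hne
    simpa [Finset.card_eq_zero.mp (Nat.le_zero.mp hN)] using hne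
  | succ N ih =>
    intro F Gd hN hsub h2 hlam hne
    obtain ⟨M, hM, hMmin⟩ := F.exists_min_image (fun S => S.card) hne
    obtain ⟨x, hxM, y, hyM, hxy⟩ := Finset.one_lt_card.mp (lt_of_lt_of_le one_lt_two (h2 M hM))
    by_cases hFM : F.erase M = ∅
    · have hF1 : F = {M} := by
        apply Finset.eq_singleton_iff_unique_mem.mpr
        refine ⟨hM, fun z hz => ?_⟩
        by_contra hzM
        exact (Finset.notMem_empty z) (hFM ▸ Finset.mem_erase.mpr ⟨hzM, hz⟩)
      rw [hF1, Finset.card_singleton]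
      calc 1 < 2 := one_lt_two
        _ ≤ M.card := h2 M hM
        _ ≤ Gd.card := Finset.card_le_card (hsub M hM)
    · -- the key step: erase `y` from everything except `M`
      have hMsub : ∀ S ∈ F.erase M, y ∈ S → M ⊆ S := by
        intro S hS hyS
        obtain ⟨hSM, hSF⟩ := Finset.mem_erase.mp hS
        rcases hlam S hSF M hM with h | h | h
        · exact absurd (Finset.eq_of_subset_of_card_le h (hMmin S hSF)) hSM
        · exact h
        · exact absurd (Finset.disjoint_left.mp h hyS) (fun c => c hyM)
      set F' : Finset (Finset V) := (F.erase M).image (fun S => S.erase y) with hF'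
      have hinjOn : Set.InjOn (fun S : Finset V => S.erase y) ↑(F.erase M) := by
        intro S hS S' hS' hSS'
        simp only at hSS'
        by_cases hyS : y ∈ S <;> by_cases hyS' : y ∈ S'
        · rw [← Finset.insert_erase hyS, ← Finset.insert_erase hyS', hSS']
        · exfalso
          have hxS : x ∈ S.erase y := Finset.mem_erase.mpr ⟨hxy, hMsub S hS hyS hxM⟩
          have hxS' : x ∈ S' := Finset.mem_of_mem_erase (hSS' ▸ hxS)
          obtain ⟨hS'M, hS'F⟩ := Finset.mem_erase.mp hS'
          rcases hlam S' hS'F M hM with h | h | h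
          · exact hS'M (Finset.eq_of_subset_of_card_le h (hMmin S' hS'F))
          · exact hyS' (h hyM)
          · exact Finset.disjoint_left.mp h hxS' hxM
        · exfalso
          have hxS' : x ∈ S'.erase y := Finset.mem_erase.mpr ⟨hxy, hMsub S' hS' hyS' hxM⟩
          have hxS : x ∈ S := Finset.mem_of_mem_erase (hSS' ▸ hxS')
          obtain ⟨hSM, hSF⟩ := Finset.mem_erase.mp hS
          rcases hlam S hSF M hM with h | h | h
          · exact hSM (Finset.eq_of_subset_of_card_le h (hMmin S hSF))
          · exact hyS (h hyM)
          · exact Finset.disjoint_left.mp h hxS hxM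
        · rwa [Finset.erase_eq_of_notMem hyS, Finset.erase_eq_of_notMem hyS'] at hSS'
      have hF'card : F'.card = F.card - 1 := by
        rw [hF', Finset.card_image_of_injOn hinjOn, Finset.card_erase_of_mem hM]
      have hyG : y ∈ Gd := hsub M hM hyM
      have main : F'.card < (Gd.erase y).card := by
        apply ih F' (Gd.erase y)
        · rw [hF'card]
          omega
        · intro S hS
          obtain ⟨S₀, hS₀, rfl⟩ := Finset.mem_image.mp hS
          exact Finset.erase_subset_erase y (hsub S₀ (Finset.mem_of_mem_erase hS₀))
        · intro S hS
          obtain ⟨S₀, hS₀, rfl⟩ := Finset.mem_image.mp hS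
          by_cases hyS : y ∈ S₀
          · have hMS : M ⊆ S₀ := hMsub S₀ hS₀ hyS
            have : M ≠ S₀ := fun h => (Finset.mem_erase.mp hS₀).1 h.symm
            have hlt : M.card < S₀.card :=
              Finset.card_lt_card (Finset.ssubset_iff_subset_ne.mpr ⟨hMS, this⟩)
            have := h2 M hM
            rw [Finset.card_erase_of_mem hyS]
            omega
          · rw [Finset.erase_eq_of_notMem hyS]
            exact h2 S₀ (Finset.mem_of_mem_erase hS₀)
        · intro S hS S' hS'
          obtain ⟨S₀, hS₀, rfl⟩ := Finset.mem_image.mp hS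
          obtain ⟨S₀', hS₀', rfl⟩ := Finset.mem_image.mp hS'
          rcases hlam S₀ (Finset.mem_of_mem_erase hS₀) S₀' (Finset.mem_of_mem_erase hS₀') with
            h | h | h
          · exact Or.inl (Finset.erase_subset_erase y h)
          · exact Or.inr (Or.inl (Finset.erase_subset_erase y h))
          · exact Or.inr (Or.inr (h.mono (Finset.erase_subset y S₀) (Finset.erase_subset y S₀')))
        · obtain ⟨Z, hZ⟩ := Finset.nonempty_iff_ne_empty.mpr hFM
          exact ⟨Z.erase y, Finset.mem_image_of_mem _ hZ⟩
      have hFpos : 1 ≤ F.card := Finset.card_pos.mpr hne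
      rw [Finset.card_erase_of_mem hyG] at main
      omega

/-- For a tree with a chosen root `r`, there is a parent assignment with the
usual properties. -/
lemma tree_parent (hT : T.IsTree) (r : V) :
    ∃ (par : V → V) (len : V → ℕ),
      (∀ v, v ≠ r → T.Adj v (par v)) ∧
      (∀ v, v ≠ r → len (par v) + 1 = len v) ∧
      (∀ v w, v ≠ r → w ≠ r → (s(v, par v) : Sym2 V) = s(w, par w) → v = w) ∧
      (∀ x y, T.Adj x y → (x ≠ r ∧ par x = y) ∨ (y ≠ r ∧ par y = x)) ∧
      (∀ v, v ≠ r → ∀ (q : T.Walk v r), q.IsPath → par v ∈ q.support) := by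
  classical
  have hex := hT.existsUnique_path
  choose f hfp hfu using fun v => hex v r
  have huniq : ∀ (v : V) (q : T.Walk v r), q.IsPath → q = f v := fun v q hq => hfu v q hq
  refine ⟨fun v => (f v).getVert 1, fun v => (f v).length, ?_, ?_, ?_, ?_, ?_⟩
  · intro v hv
    exact Walk.adj_snd (Walk.not_nil_of_ne hv)
  · intro v hv
    have hnn : ¬ (f v).Nil := Walk.not_nil_of_ne hv
    have htail : (f v).tail = f ((f v).getVert 1) :=
      huniq _ ((f v).tail) (hfp v).tail
    have := Walk.length_tail_add_one hnn (p := f v)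
    rw [htail] at this
    exact this
  · intro v w hv hw hvw
    have hlenv : (f ((f v).getVert 1)).length + 1 = (f v).length := by
      have hnn : ¬ (f v).Nil := Walk.not_nil_of_ne hv
      have htail : (f v).tail = f ((f v).getVert 1) := huniq _ _ (hfp v).tail
      have := Walk.length_tail_add_one hnn (p := f v); rwa [htail] at this
    have hlenw : (f ((f w).getVert 1)).length + 1 = (f w).length := by
      have hnn : ¬ (f w).Nil := Walk.not_nil_of_ne hw
      have htail : (f w).tail = f ((f w).getVert 1) := huniq _ _ (hfp w).tail
      have := Walk.length_tail_add_one hnn (p := f w); rwa [htail] at this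
    rw [Sym2.eq_iff] at hvw
    rcases hvw with ⟨h1, _⟩ | ⟨h1, h2⟩
    · exact h1
    · -- v = par w and par v = w : contradiction on lengths
      exfalso
      simp only at h1 h2
      rw [← h1] at hlenw
      rw [h2] at hlenv
      omega
  · -- every edge of T joins a non-root vertex to its parent
    intro x y hadj
    have key : ∀ a b : V, T.Adj a b → (f a).length ≤ (f b).length →
        b ≠ r ∧ (f b).getVert 1 = a := by
      intro a b hab hlen
      have hbr : b ≠ r := by
        intro hbr
        subst hbr
        have : (f b) = Walk.nil := (huniq b Walk.nil Walk.IsPath.nil).symm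
        rw [this] at hlen
        simp only [Walk.length_nil, Nat.le_zero] at hlen
        have : a = b := Walk.eq_of_length_eq_zero hlen
        exact T.irrefl (this ▸ hab)
      have hbs : b ∉ (f a).support := by
        intro hbs
        have hdrop : (f a).dropUntil b hbs = f b :=
          huniq b _ ((hfp a).dropUntil hbs)
        have hspec := Walk.take_spec (f a) hbs
        have hlen2 : ((f a).takeUntil b hbs).length + ((f a).dropUntil b hbs).length
            = (f a).length := by
          rw [← Walk.length_append, hspec]
        have htpos : 0 < ((f a).takeUntil b hbs).length := by
          rcases Nat.eq_zero_or_pos ((f a).takeUntil b hbs).length with h0 | h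
          · exact absurd (Walk.eq_of_length_eq_zero h0 ▸ hab) (T.irrefl)
          · exact h
        rw [hdrop] at hlen2
        omega
      have hcons : Walk.cons hab.symm (f a) = f b :=
        huniq b _ ((Walk.cons_isPath_iff hab.symm (f a)).mpr ⟨hfp a, hbs⟩)
      refine ⟨hbr, ?_⟩
      rw [← hcons, Walk.getVert_cons_succ, Walk.getVert_zero]
    rcases le_total (f x).length (f y).length with h | h
    · exact Or.inr (key x y hadj h)
    · exact Or.inl (key y x hadj.symm h)
  · intro v hv q hq
    have hnn : ¬ (f v).Nil := Walk.not_nil_of_ne hv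
    rw [huniq v q hq]
    have h1 : (f v).getVert 1 ∈ (f v).tail.support := Walk.start_mem_support _
    have h2 : (f v).tail.support = (f v).support.tail := Walk.support_tail_of_not_nil _ hnn
    rw [h2] at h1
    exact List.mem_of_mem_tail h1

/-- Lower bound on the number of edges inside a connected subset of a tree. -/
lemma edges_lower [Fintype T.edgeSet] (hT : T.IsTree) (S : Finset V)
    (hconn : (T.induce (S : Set V)).Connected) (hS : S.Nonempty) :
    S.card - 1 ≤ (T.edgeFinset.filter (fun e => ∀ a ∈ e, a ∈ S)).card := by
  classical
  obtain ⟨r, hr⟩ := hS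
  obtain ⟨par, len, hadj, hlen, hinj, hsurj, hsup⟩ := tree_parent hT r
  have hmapsto : ∀ v ∈ S.erase r,
      (s(v, par v) : Sym2 V) ∈ T.edgeFinset.filter (fun e => ∀ a ∈ e, a ∈ S) := by
    intro v hv
    obtain ⟨hvr, hvS⟩ := Finset.mem_erase.mp hv
    have hparS : par v ∈ S := by
      obtain ⟨w⟩ := hconn.preconnected ⟨v, by simpa using hvS⟩ ⟨r, by simpa using hr⟩
      let emb : T.induce (S : Set V) ↪g T := SimpleGraph.Embedding.induce (S : Set V)
      let W : T.Walk v r := w.map emb.toHom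
      have hWsup : ∀ x ∈ W.support, x ∈ S := by
        intro x hx
        change x ∈ (w.map emb.toHom).support at hx
        rw [Walk.support_map] at hx
        obtain ⟨⟨x₀, hx₀⟩, _, rfl⟩ := List.mem_map.mp hx
        exact (by simpa using hx₀ : x₀ ∈ S)
      have hmem := hsup v hvr (W.toPath : T.Walk v r) (W.toPath).2
      exact hWsup _ (Walk.support_toPath_subset W hmem)
    rw [Finset.mem_filter, SimpleGraph.mem_edgeFinset, SimpleGraph.mem_edgeSet]
    refine ⟨hadj v hvr, ?_⟩
    intro a ha
    rcases Sym2.mem_iff.mp ha with rfl | rfl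
    · exact hvS
    · exact hparS
  have := Finset.card_le_card_of_injOn (fun v => (s(v, par v) : Sym2 V)) hmapsto ?_
  · rwa [Finset.card_erase_of_mem hr] at this
  · intro v hv w hw hvw
    exact hinj v w (Finset.mem_erase.mp hv).1 (Finset.mem_erase.mp hw).1 hvw

/-- Upper bound on the number of edges inside a disconnected subset of a tree. -/
lemma edges_upper [Fintype T.edgeSet] (hT : T.IsTree) (C : Finset V)
    (hdis : ¬ (T.induce (C : Set V)).Connected) (hC : 2 ≤ C.card) :
    (T.edgeFinset.filter (fun e => ∀ a ∈ e, a ∈ C)).card ≤ C.card - 2 := by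
  classical
  have hCne : C.Nonempty := Finset.card_pos.mp (by omega)
  have hne : Nonempty ((C : Set V) : Type _) := by
    obtain ⟨z, hz⟩ := hCne
    exact ⟨⟨z, by simpa using hz⟩⟩
  rw [SimpleGraph.connected_iff] at hdis
  push_neg at hdis
  have hnp : ¬ (T.induce (C : Set V)).Preconnected := fun h => (hdis h).false hne.some
  simp only [SimpleGraph.Preconnected] at hnp
  push_neg at hnp
  obtain ⟨⟨x, hxC⟩, ⟨y, hyC⟩, hnr⟩ := hnp
  obtain ⟨par, len, hadj, hlen, hinj, hsurj, hsup⟩ := tree_parent hT x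
  have hxC' : x ∈ C := by simpa using hxC
  have hyC' : y ∈ C := by simpa using hyC
  -- find a vertex u of C whose parent is outside C
  have hfind : ∃ u, u ∈ C ∧ u ≠ x ∧ par u ∉ C := by
    have main : ∀ (N : ℕ) (v : V) (hv : v ∈ C), len v ≤ N →
        ¬ (T.induce (C : Set V)).Reachable ⟨v, by simpa using hv⟩ ⟨x, hxC⟩ →
        ∃ u, u ∈ C ∧ u ≠ x ∧ par u ∉ C := by
      intro N
      induction N with
      | zero =>
        intro v hv hlv hnr'
        have hvx : v ≠ x := by
          rintro rfl
          exact hnr' (SimpleGraph.Reachable.refl _)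
        have := hlen v hvx
        omega
      | succ N ih =>
        intro v hv hlv hnr'
        have hvx : v ≠ x := by
          rintro rfl
          exact hnr' (SimpleGraph.Reachable.refl _)
        by_cases hp : par v ∈ C
        · have hadj' : (T.induce (C : Set V)).Adj ⟨v, by simpa using hv⟩ ⟨par v, by simpa using hp⟩ := by
            simpa using hadj v hvx
          have hnr'' : ¬ (T.induce (C : Set V)).Reachable ⟨par v, by simpa using hp⟩ ⟨x, hxC⟩ :=
            fun h => hnr' (hadj'.reachable.trans h)
          have := hlen v hvx
          exact ih (par v) hp (by omega) hnr''
        · exact ⟨v, hv, hvx, hp⟩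
    exact main (len y) y hyC' le_rfl (fun h => hnr h.symm)
  obtain ⟨u, huC, hux, hpu⟩ := hfind
  -- every edge inside C is s(v, par v) for some v in C \ {x, u}
  have hsub : T.edgeFinset.filter (fun e => ∀ a ∈ e, a ∈ C) ⊆
      ((C.erase x).erase u).image (fun v => (s(v, par v) : Sym2 V)) := by
    intro e he
    obtain ⟨hee, hein⟩ := Finset.mem_filter.mp he
    induction e using Sym2.inductionOn with
    | hf a b =>
      have hab : T.Adj a b := by simpa using hee
      have haC : a ∈ C := hein a (by simp)
      have hbC : b ∈ C := hein b (by simp)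
      rcases hsurj a b hab with ⟨har, hpar⟩ | ⟨hbr, hpar⟩
      · refine Finset.mem_image.mpr ⟨a, ?_, by rw [hpar]⟩
        refine Finset.mem_erase.mpr ⟨?_, Finset.mem_erase.mpr ⟨har, haC⟩⟩
        rintro rfl
        exact hpu (hpar ▸ hbC)
      · refine Finset.mem_image.mpr ⟨b, ?_, by rw [hpar, Sym2.eq_swap]⟩
        refine Finset.mem_erase.mpr ⟨?_, Finset.mem_erase.mpr ⟨hbr, hbC⟩⟩
        rintro rfl
        exact hpu (hpar ▸ haC)
  calc (T.edgeFinset.filter (fun e => ∀ a ∈ e, a ∈ C)).card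
      ≤ (((C.erase x).erase u).image (fun v => (s(v, par v) : Sym2 V))).card :=
        Finset.card_le_card hsub
    _ ≤ ((C.erase x).erase u).card := Finset.card_image_le
    _ = C.card - 2 := by
        rw [Finset.card_erase_of_mem (Finset.mem_erase.mpr ⟨hux, huC⟩),
          Finset.card_erase_of_mem hxC']
        omega

/-- The pigeonhole step: two distinct tree edges with the same containment
pattern with respect to the channels. -/
lemma pigeonhole [Fintype T.edgeSet] (hT : T.IsTree)
    {κ : Type*} [Fintype κ] (A : κ → Finset V)
    (hinjA : Function.Injective A)
    (hA2 : ∀ k, 2 ≤ (A k).card) (hAle : ∀ k, (A k).card + 2 ≤ Fintype.card V)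
    (hcard : Fintype.card κ + 2 = Fintype.card V)
    (hcompat : ∀ k l, A k ⊆ A l ∨ A l ⊆ A k ∨ Disjoint (A k) (A l))
    (hdisc : ∃ k, ¬ (T.induce ((A k : Set V))).Connected) :
    ∃ e₁ ∈ T.edgeFinset, ∃ e₂ ∈ T.edgeFinset, e₁ ≠ e₂ ∧
      ∀ k, (∀ a ∈ e₁, a ∈ A k) ↔ (∀ a ∈ e₂, a ∈ A k) := by
  classical
  by_contra hcon
  push_neg at hcon
  have heq : ∀ e₁ ∈ T.edgeFinset, ∀ e₂ ∈ T.edgeFinset,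
      (∀ k, (∀ a ∈ e₁, a ∈ A k) ↔ (∀ a ∈ e₂, a ∈ A k)) → e₁ = e₂ := by
    intro e₁ h₁ e₂ h₂ h
    by_contra hne
    obtain ⟨k, hk⟩ := hcon e₁ h₁ e₂ h₂ hne
    rcases hk with ⟨h1, a, ha, hna⟩ | ⟨⟨a, ha, hna⟩, h2⟩
    · exact hna ((h k).mp h1 a ha)
    · exact hna ((h k).mpr h2 a ha)
  set Fplus : Finset (Finset V) := insert Finset.univ (Finset.image A Finset.univ) with hFplus
  have hVpos : 2 ≤ Fintype.card V := by omega
  have hunivF : Finset.univ ∈ Fplus := Finset.mem_insert_self _ _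
  have hAF : ∀ k, A k ∈ Fplus := fun k =>
    Finset.mem_insert_of_mem (Finset.mem_image_of_mem A (Finset.mem_univ k))
  have hUnotim : (Finset.univ : Finset V) ∉ Finset.image A Finset.univ := by
    intro h
    obtain ⟨k, _, hk⟩ := Finset.mem_image.mp h
    have := hAle k
    rw [hk, Finset.card_univ] at *
    omega
  have hFcard : Fplus.card = Fintype.card κ + 1 := by
    rw [hFplus, Finset.card_insert_of_notMem hUnotim,
      Finset.card_image_of_injective _ hinjA, Finset.card_univ]
  have hEcard : T.edgeFinset.card = Fintype.card κ + 1 := by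
    have := hT.card_edgeFinset
    omega
  have hmem2 : ∀ S ∈ Fplus, 2 ≤ S.card := by
    intro S hS
    rcases Finset.mem_insert.mp hS with rfl | hS
    · rw [Finset.card_univ]; omega
    · obtain ⟨k, _, rfl⟩ := Finset.mem_image.mp hS
      exact hA2 k
  have hlamF : ∀ S ∈ Fplus, ∀ S' ∈ Fplus, S ⊆ S' ∨ S' ⊆ S ∨ Disjoint S S' := by
    intro S hS S' hS'
    rcases Finset.mem_insert.mp hS with rfl | hS
    · exact Or.inr (Or.inl (Finset.subset_univ _))
    · rcases Finset.mem_insert.mp hS' with rfl | hS'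
      · exact Or.inl (Finset.subset_univ _)
      · obtain ⟨k, _, rfl⟩ := Finset.mem_image.mp hS
        obtain ⟨l, _, rfl⟩ := Finset.mem_image.mp hS'
        exact hcompat k l
  -- the minimal member containing a given edge
  have hminex : ∀ e : Sym2 V, ∃ S, (S ∈ Fplus ∧ (∀ a ∈ e, a ∈ S)) ∧
      ∀ S' ∈ Fplus, (∀ a ∈ e, a ∈ S') → S.card ≤ S'.card := by
    intro e
    have hne : (Fplus.filter (fun S => ∀ a ∈ e, a ∈ S)).Nonempty :=
      ⟨Finset.univ, Finset.mem_filter.mpr ⟨hunivF, fun a _ => Finset.mem_univ a⟩⟩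
    obtain ⟨S, hS, hSmin⟩ := Finset.exists_min_image _ (fun S => S.card) hne
    obtain ⟨hSF, hSin⟩ := Finset.mem_filter.mp hS
    exact ⟨S, ⟨hSF, hSin⟩, fun S' h1 h2 => hSmin S' (Finset.mem_filter.mpr ⟨h1, h2⟩)⟩
  choose Φ hΦ using hminex
  have hΦF : ∀ e, Φ e ∈ Fplus := fun e => (hΦ e).1.1
  have hΦin : ∀ e, ∀ a ∈ e, a ∈ Φ e := fun e => (hΦ e).1.2
  have hΦmin : ∀ e, ∀ S' ∈ Fplus, (∀ a ∈ e, a ∈ S') → (Φ e).card ≤ S'.card :=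
    fun e => (hΦ e).2
  have hnested : ∀ e : Sym2 V, ∀ S ∈ Fplus, (∀ a ∈ e, a ∈ S) → Φ e ⊆ S := by
    intro e S hS hin
    have hpt : ∃ a, a ∈ e := ⟨e.out.1, Sym2.out_fst_mem e⟩
    obtain ⟨a, ha⟩ := hpt
    rcases hlamF (Φ e) (hΦF e) S hS with h | h | h
    · exact h
    · have : S = Φ e := Finset.eq_of_subset_of_card_le h (hΦmin e S hS hin)
      exact this ▸ Finset.Subset.refl _
    · exact absurd (Finset.disjoint_left.mp h (hΦin e a ha)) (fun c => c (hin a ha))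
  have hΦinj : ∀ e₁ ∈ T.edgeFinset, ∀ e₂ ∈ T.edgeFinset, Φ e₁ = Φ e₂ → e₁ = e₂ := by
    intro e₁ h₁ e₂ h₂ h
    apply heq e₁ h₁ e₂ h₂
    intro k
    constructor
    · intro hin a ha
      exact (h ▸ hnested e₁ (A k) (hAF k) hin) (hΦin e₂ a ha)
    · intro hin a ha
      exact (h.symm ▸ hnested e₂ (A k) (hAF k) hin) (hΦin e₁ a ha)
  have hΦim : T.edgeFinset.image Φ = Fplus := by
    apply Finset.eq_of_subset_of_card_le
    · intro S hS
      obtain ⟨e, _, rfl⟩ := Finset.mem_image.mp hS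
      exact hΦF e
    · rw [Finset.card_image_of_injOn (fun e h1 e' h2 h => hΦinj e h1 e' h2 h), hEcard, hFcard]
  -- the edge count inside each member equals the number of members it contains
  have hcount : ∀ S ∈ Fplus,
      (T.edgeFinset.filter (fun e => ∀ a ∈ e, a ∈ S)).card
        = (Fplus.filter (fun M => M ⊆ S)).card := by
    intro S hS
    have him : (T.edgeFinset.filter (fun e => ∀ a ∈ e, a ∈ S)).image Φ
        = Fplus.filter (fun M => M ⊆ S) := by
      apply Finset.Subset.antisymm
      · intro M hM
        obtain ⟨e, he, rfl⟩ := Finset.mem_image.mp hM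
        obtain ⟨heE, hein⟩ := Finset.mem_filter.mp he
        exact Finset.mem_filter.mpr ⟨hΦF e, hnested e S hS hein⟩
      · intro M hM
        obtain ⟨hMF, hMS⟩ := Finset.mem_filter.mp hM
        obtain ⟨e, heE, rfl⟩ := Finset.mem_image.mp (hΦim ▸ hMF)
        refine Finset.mem_image.mpr ⟨e, Finset.mem_filter.mpr ⟨heE, ?_⟩, rfl⟩
        intro a ha
        exact hMS (hΦin e a ha)
    rw [← him, Finset.card_image_of_injOn]
    intro e h1 e' h2 h
    exact hΦinj e (Finset.mem_filter.mp h1).1 e' (Finset.mem_filter.mp h2).1 h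
  -- pick the largest disconnected channel C
  have hDne : ((Finset.univ : Finset κ).filter
      (fun k => ¬ (T.induce ((A k : Set V))).Connected)).Nonempty := by
    obtain ⟨k, hk⟩ := hdisc
    exact ⟨k, Finset.mem_filter.mpr ⟨Finset.mem_univ k, hk⟩⟩
  obtain ⟨k₀, hk₀, hk₀max⟩ := Finset.exists_max_image _ (fun k => (A k).card) hDne
  have hCdis : ¬ (T.induce ((A k₀ : Set V))).Connected := (Finset.mem_filter.mp hk₀).2
  set C : Finset V := A k₀ with hCdef
  -- pick the smallest member strictly containing C
  have h𝒟ne : (Fplus.filter (fun D => C ⊂ D)).Nonempty := by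
    refine ⟨Finset.univ, Finset.mem_filter.mpr ⟨hunivF, ?_⟩⟩
    rw [Finset.ssubset_univ_iff]
    intro h
    have := hAle k₀
    rw [hCdef] at h
    rw [h, Finset.card_univ] at this
    omega
  obtain ⟨D, hD, hDmin⟩ := Finset.exists_min_image _ (fun D => D.card) h𝒟ne
  obtain ⟨hDF, hCD⟩ := Finset.mem_filter.mp hD
  have hCcardlt : C.card < D.card := Finset.card_lt_card hCD
  -- D is connected (or is the whole vertex set)
  have hDlow : D.card - 1 ≤ (T.edgeFinset.filter (fun e => ∀ a ∈ e, a ∈ D)).card := by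
    rcases Finset.mem_insert.mp hDF with rfl | hDim
    · have : T.edgeFinset.filter (fun e => ∀ a ∈ e, a ∈ (Finset.univ : Finset V))
          = T.edgeFinset := Finset.filter_true_of_mem (fun e _ => fun a _ => Finset.mem_univ a)
      rw [this, hEcard, Finset.card_univ]
      omega
    · obtain ⟨l, _, rfl⟩ := Finset.mem_image.mp hDim
      have hconn : (T.induce ((A l : Set V))).Connected := by
        by_contra hd
        have hmem : l ∈ (Finset.univ : Finset κ).filter
            (fun k => ¬ (T.induce ((A k : Set V))).Connected) :=
          Finset.mem_filter.mpr ⟨Finset.mem_univ l, hd⟩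
        have := hk₀max l hmem
        omega
      apply edges_lower hT _ hconn
      have := hA2 l
      exact Finset.card_pos.mp (by omega)
  have hCup : (T.edgeFinset.filter (fun e => ∀ a ∈ e, a ∈ C)).card ≤ C.card - 2 :=
    edges_upper hT C hCdis (hA2 k₀)
  have hCcount := hcount C (hAF k₀)
  have hDcount := hcount D hDF
  -- members inside D: members inside C, D itself, and members inside D \ C
  set F₀ : Finset (Finset V) := Fplus.filter (fun M => M ⊆ D \ C) with hF₀
  have hsplit : Fplus.filter (fun M => M ⊆ D) ⊆
      (Fplus.filter (fun M => M ⊆ C)) ∪ {D} ∪ F₀ := by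
    intro M hM
    obtain ⟨hMF, hMD⟩ := Finset.mem_filter.mp hM
    by_cases hMC : M ⊆ C
    · exact Finset.mem_union.mpr (Or.inl (Finset.mem_union.mpr
        (Or.inl (Finset.mem_filter.mpr ⟨hMF, hMC⟩))))
    · by_cases hMDeq : M = D
      · exact Finset.mem_union.mpr (Or.inl (Finset.mem_union.mpr
          (Or.inr (Finset.mem_singleton.mpr hMDeq))))
      · refine Finset.mem_union.mpr (Or.inr (Finset.mem_filter.mpr ⟨hMF, ?_⟩))
        rcases hlamF M hMF C (hAF k₀) with h | h | h
        · exact absurd h hMC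
        · exfalso
          have hCM : C ⊂ M := Finset.ssubset_iff_subset_ne.mpr
            ⟨h, fun hc => hMC (hc ▸ Finset.Subset.refl M)⟩
          have hM𝒟 : M ∈ Fplus.filter (fun D => C ⊂ D) := Finset.mem_filter.mpr ⟨hMF, hCM⟩
          have h1 := hDmin M hM𝒟
          have h2 : M.card < D.card :=
            Finset.card_lt_card (Finset.ssubset_iff_subset_ne.mpr ⟨hMD, hMDeq⟩)
          omega
        · exact Finset.subset_sdiff.mpr ⟨hMD, h⟩
  have hF₀bound : F₀.card = 0 ∨ F₀.card < D.card - C.card := by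
    by_cases hF₀ne : F₀.Nonempty
    · right
      have := laminar_bound F₀.card F₀ (D \ C) le_rfl
        (fun S hS => (Finset.mem_filter.mp hS).2)
        (fun S hS => hmem2 S (Finset.mem_filter.mp hS).1)
        (fun S hS S' hS' => hlamF S (Finset.mem_filter.mp hS).1 S' (Finset.mem_filter.mp hS').1)
        hF₀ne
      rwa [Finset.card_sdiff_of_subset hCD.subset] at this
    · left
      rw [Finset.not_nonempty_iff_eq_empty.mp hF₀ne, Finset.card_empty]
  have hchain : (Fplus.filter (fun M => M ⊆ D)).card ≤
      (Fplus.filter (fun M => M ⊆ C)).card + 1 + F₀.card := by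
    calc (Fplus.filter (fun M => M ⊆ D)).card
        ≤ ((Fplus.filter (fun M => M ⊆ C)) ∪ {D} ∪ F₀).card := Finset.card_le_card hsplit
      _ ≤ ((Fplus.filter (fun M => M ⊆ C)) ∪ {D}).card + F₀.card := Finset.card_union_le _ _
      _ ≤ (Fplus.filter (fun M => M ⊆ C)).card + 1 + F₀.card := by
          have := Finset.card_union_le (Fplus.filter (fun M => M ⊆ C)) ({D} : Finset (Finset V))
          simp only [Finset.card_singleton] at this
          omega
  have hC2 : 2 ≤ C.card := hA2 k₀
  rw [hCcount] at hCup
  rw [hDcount] at hDlow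
  omega

end GraphLemmas

end Stmt19Aux

open Stmt19Aux in
/-- Vanishing pullback on a Cayley hyperplane H(C_n): if a cubic tree's channels
A 1, …, A (n−3) (mutually compatible subsets of the vertex set {2,…,n} of the
spanning tree T = C_n) include one that does not induce a connected subgraph of
T, then the (n−3) differentials ds_{A k} are linearly dependent on the tangent
space of H(C_n) — i.e. there is a nonzero tangent vector δ (symmetric, supported
on the edges of C_n, with total sum zero) annihilated by all of them; hence the
Jacobian N_g vanishes. -/
theorem stmt19 (n : ℕ) (hn : 4 ≤ n)
    (T : SimpleGraph (Fin (n - 1))) (hT : T.IsTree)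
    (A : Fin (n - 3) → Finset (Fin (n - 1)))
    (hinj : Function.Injective A)
    (hsize : ∀ k, 2 ≤ (A k).card ∧ (A k).card ≤ n - 3)
    (hcompat : ∀ k l, A k ⊆ A l ∨ A l ⊆ A k ∨ Disjoint (A k) (A l))
    (hdisc : ∃ k, ¬ (T.induce ((A k : Set (Fin (n - 1))))).Connected) :
    ∃ δ : Fin (n - 1) → Fin (n - 1) → ℝ, δ ≠ 0 ∧
      (∀ p q, δ p q = δ q p) ∧
      (∀ p q, ¬ T.Adj p q → δ p q = 0) ∧
      (∑ p, ∑ q, δ p q) = 0 ∧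
      (∀ k, (∑ p ∈ A k, ∑ q ∈ A k, δ p q) = 0) := by
  classical
  obtain ⟨e₁, he₁, e₂, he₂, hne, hiff⟩ := pigeonhole hT A hinj
    (fun k => (hsize k).1)
    (fun k => by have := (hsize k).2; simp only [Fintype.card_fin]; omega)
    (by simp only [Fintype.card_fin]; omega)
    hcompat hdisc
  obtain ⟨⟨a, b⟩, rfl⟩ := e₁.exists_rep
  obtain ⟨⟨c, d⟩, rfl⟩ := e₂.exists_rep
  have hadjab : T.Adj a b := by simpa using he₁
  have hadjcd : T.Adj c d := by simpa using he₂
  have hab : a ≠ b := hadjab.ne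
  have hcd : c ≠ d := hadjcd.ne
  have hforall : ∀ (x y : Fin (n-1)) (S : Finset (Fin (n-1))),
      (∀ v ∈ (s(x, y) : Sym2 (Fin (n-1))), v ∈ S) ↔ (x ∈ S ∧ y ∈ S) := by
    intro x y S
    constructor
    · intro h
      exact ⟨h x (by simp), h y (by simp)⟩
    · rintro ⟨h1, h2⟩ v hv
      rcases Sym2.mem_iff.mp hv with rfl | rfl
      · exact h1
      · exact h2
  have hiff' : ∀ k, (a ∈ A k ∧ b ∈ A k) ↔ (c ∈ A k ∧ d ∈ A k) := by
    intro k
    beta_reduce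
    rw [← hforall a b, ← hforall c d]
    exact hiff k
  refine ⟨fun p q =>
      (if (p = a ∧ q = b) ∨ (p = b ∧ q = a) then (1:ℝ) else 0)
      - (if (p = c ∧ q = d) ∨ (p = d ∧ q = c) then (1:ℝ) else 0), ?_, ?_, ?_, ?_, ?_⟩
  · -- nonzero
    intro h0
    have hcond : ¬((a = c ∧ b = d) ∨ (a = d ∧ b = c)) := by
      rintro (⟨rfl, rfl⟩ | ⟨rfl, rfl⟩)
      · exact hne rfl
      · exact hne Sym2.eq_swap
    have := congrFun (congrFun h0 a) b
    simp only [Pi.zero_apply] at this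
    simp [hcond] at this
  · -- symmetric
    intro p q
    beta_reduce
    have h1 : ((p = a ∧ q = b) ∨ (p = b ∧ q = a)) ↔ ((q = a ∧ p = b) ∨ (q = b ∧ p = a)) := by
      constructor
      · rintro (⟨h, h'⟩ | ⟨h, h'⟩)
        · exact Or.inr ⟨h', h⟩
        · exact Or.inl ⟨h', h⟩
      · rintro (⟨h, h'⟩ | ⟨h, h'⟩)
        · exact Or.inr ⟨h', h⟩
        · exact Or.inl ⟨h', h⟩
    have h2 : ((p = c ∧ q = d) ∨ (p = d ∧ q = c)) ↔ ((q = c ∧ p = d) ∨ (q = d ∧ p = c)) := by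
      constructor
      · rintro (⟨h, h'⟩ | ⟨h, h'⟩)
        · exact Or.inr ⟨h', h⟩
        · exact Or.inl ⟨h', h⟩
      · rintro (⟨h, h'⟩ | ⟨h, h'⟩)
        · exact Or.inr ⟨h', h⟩
        · exact Or.inl ⟨h', h⟩
    simp only [h1, h2]
  · -- supported on edges
    intro p q hnadj
    beta_reduce
    rw [if_neg, if_neg, sub_zero]
    · rintro (⟨rfl, rfl⟩ | ⟨rfl, rfl⟩)
      · exact hnadj hadjcd
      · exact hnadj hadjcd.symm
    · rintro (⟨rfl, rfl⟩ | ⟨rfl, rfl⟩)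
      · exact hnadj hadjab
      · exact hnadj hadjab.symm
  · -- total sum is zero
    beta_reduce
    rw [Finset.sum_congr rfl (fun p _ => Finset.sum_sub_distrib _ _), Finset.sum_sub_distrib,
      pairsum _ a b hab, pairsum _ c d hcd]
    simp
  · -- each channel sum is zero
    intro k
    beta_reduce
    rw [Finset.sum_congr rfl (fun p _ => Finset.sum_sub_distrib _ _), Finset.sum_sub_distrib,
      pairsum _ a b hab, pairsum _ c d hcd, if_congr (hiff' k) rfl rfl, sub_self]
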